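/- In the example K^{crit}_T(ℂ², xy): the k_T-module M presented by generators g_W, g_x, g_y (classes of O_W, O_{x=0}, O_{y=0}) with single relation g_W = g_x + t₂·g_y (from the exact sequence 0 → t₂O_{x=0} → O_W → O_{y=0} → 0), embedded in k_T = ℤ[t₁^±,t₂^±] via g_W ↦ 1-t₁t₂, g_x ↦ 1-t₁, g_y ↦ 1-t₂, satisfies: the quotient of M by the submodule generated by g_W is isomorphic to k_T/(1 - t₁t₂) via g_y ↦ 1. -/

import Mathlib

open LaurentPolynomial Polynomial

noncomputable def epsHom (R : Type*) [CommRing R] : R[T;T⁻¹] →+* R :=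
  AddMonoidAlgebra.liftNCRingHom (RingHom.id R) 1 (fun x _ => Commute.one_right x)

variable {R : Type*} [CommRing R]

lemma epsHom_single (n : ℤ) (r : R) : epsHom R (AddMonoidAlgebra.single n r) = r := by
  have := AddMonoidAlgebra.liftNC_single ((RingHom.id R).toAddMonoidHom)
    (⇑(1 : Multiplicative ℤ →* R)) n r
  simpa [epsHom, AddMonoidAlgebra.liftNCRingHom] using this

lemma epsHom_C (r : R) : epsHom R (C r) = r := epsHom_single 0 r

lemma epsHom_T (n : ℤ) : epsHom R (T n : R[T;T⁻¹]) = 1 := epsHom_single n 1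

lemma epsHom_toLaurent (p : R[X]) : epsHom R (toLaurent p) = p.eval 1 := by
  have : (epsHom R).comp (toLaurent (R := R)) = Polynomial.evalRingHom 1 := by
    apply Polynomial.ringHom_ext
    · intro a; simp [epsHom_C]
    · simp [epsHom_T]
  exact congrFun (congrArg (fun f => f.toFun) this) p

lemma dvd_of_eps_eq_zero (f : R[T;T⁻¹]) (h : epsHom R f = 0) :
    (1 - T 1 : R[T;T⁻¹]) ∣ f := by
  obtain ⟨n, f', hf⟩ := f.exists_T_pow
  have h1 : f'.eval 1 = 0 := by
    rw [← epsHom_toLaurent, hf, map_mul, h, zero_mul]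
  have h2 : (X - Polynomial.C 1 : R[X]) ∣ f' := Polynomial.dvd_iff_isRoot.mpr h1
  have h3 : (T 1 - 1 : R[T;T⁻¹]) ∣ toLaurent f' := by
    have := map_dvd (toLaurent (R := R)) h2
    simpa using this
  have hfeq : f = toLaurent f' * T (-n) := by
    rw [hf, mul_T_assoc]; simp
  rw [← neg_sub (T 1 : R[T;T⁻¹]) 1, neg_dvd, hfeq]
  exact Dvd.dvd.mul_right h3 _

lemma one_sub_T_ne_zero [Nontrivial R] : (1 - T 1 : R[T;T⁻¹]) ≠ 0 := by
  intro h
  have h2 : (T 0 : R[T;T⁻¹]) = T 1 := T_zero.trans (sub_eq_zero.mp h)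
  have := congrArg (fun f : R[T;T⁻¹] => f.coeff 0) h2
  simp only [T_apply] at this
  norm_num at this

/-!
STATEMENT 13: The example K^{crit}_T(ℂ², xy).  In k_T = ℤ[t₁^{±1}, t₂^{±1}] (realized
as ℤ[t₁^{±1}][t₂^{±1}]), the k_T-module M = K_T(W) is generated by the classes
g_W = [O_W] ↦ 1 - t₁t₂, g_x = [O_{x=0}] ↦ 1 - t₁, g_y = [O_{y=0}] ↦ 1 - t₂ (the single
relation among the generators being the one coming from the short exact sequence
0 → t₂O_{x=0} → O_W → O_{y=0} → 0, which holds automatically among these elements of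
k_T).  The claim: the quotient of M by the submodule generated by g_W is isomorphic to
k_T/(1 - t₁t₂) via g_y ↦ 1, realizing K^{crit}_T(ℂ², xy) ≅ (1-t₂)k_T/⟨1-t₁t₂⟩.
-/
set_option maxHeartbeats 1000000 in
theorem critical_K_theory_C2_xy :
    ∀ (t₁ t₂ : LaurentPolynomial (LaurentPolynomial ℤ)),
      t₁ = LaurentPolynomial.C (LaurentPolynomial.T 1) →
      t₂ = LaurentPolynomial.T 1 →
      ∀ (gW gx gy : LaurentPolynomial (LaurentPolynomial ℤ)),
        gW = 1 - t₁ * t₂ → gx = 1 - t₁ → gy = 1 - t₂ →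
        ∀ (M : Submodule (LaurentPolynomial (LaurentPolynomial ℤ))
              (LaurentPolynomial (LaurentPolynomial ℤ)))
          (hM : M = Submodule.span _ {gW, gx, gy})
          (hgW : gW ∈ M) (hgy : gy ∈ M)
          (P : Submodule (LaurentPolynomial (LaurentPolynomial ℤ)) M),
          P = Submodule.span _ {(⟨gW, hgW⟩ : M)} →
          ∃ e : (@HasQuotient.Quotient M _ Submodule.hasQuotient P) ≃ₗ[LaurentPolynomial (LaurentPolynomial ℤ)]
              (LaurentPolynomial (LaurentPolynomial ℤ) ⧸ Ideal.span {1 - t₁ * t₂}),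
            e (Submodule.Quotient.mk (⟨gy, hgy⟩ : M)) = 1 := by
  intro t₁ t₂ ht₁ ht₂ gW gx gy hW hx hy M hM hgW hgy P hP
  set I : Ideal (LaurentPolynomial (LaurentPolynomial ℤ)) := Ideal.span {1 - t₁ * t₂} with hI
  -- the linear map r ↦ [r • gy]
  let ψ := (Submodule.mkQ (R := LaurentPolynomial (LaurentPolynomial ℤ)) (M := M) P) ∘ₗ LinearMap.toSpanSingleton (LaurentPolynomial (LaurentPolynomial ℤ)) M ⟨gy, hgy⟩
  have hψ : ∀ r : LaurentPolynomial (LaurentPolynomial ℤ), ψ r = Submodule.Quotient.mk (r • (⟨gy, hgy⟩ : M)) := by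
    intro r
    simp only [ψ, LinearMap.comp_apply, LinearMap.toSpanSingleton_apply, Submodule.mkQ_apply]
  have hψgW : ψ gW = 0 := by
    rw [hψ, Submodule.Quotient.mk_eq_zero]
    have heq : gW • (⟨gy, hgy⟩ : M) = gy • (⟨gW, hgW⟩ : M) := by
      apply Subtype.ext
      show gW • gy = gy • gW
      simp [smul_eq_mul, mul_comm]
    rw [heq, hP]
    exact Submodule.smul_mem _ _ (Submodule.mem_span_singleton_self _)
  have hIle : I ≤ LinearMap.ker ψ := by
    rw [hI, Ideal.span_le]
    intro z hz
    simp only [Set.mem_singleton_iff] at hz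
    subst hz
    rw [SetLike.mem_coe, LinearMap.mem_ker, ← hW]
    exact hψgW
  let ψq := Submodule.liftQ I ψ hIle
  -- useful facts
  have ht2u : (T (-1) : LaurentPolynomial (LaurentPolynomial ℤ)) * t₂ = 1 := by
    rw [ht₂, ← T_add]; norm_num
  have hgy0 : gy ≠ 0 := by rw [hy, ht₂]; exact one_sub_T_ne_zero
  -- injectivity
  have hker : LinearMap.ker ψ ≤ I := by
    intro r hr
    rw [LinearMap.mem_ker, hψ, Submodule.Quotient.mk_eq_zero, hP,
      Submodule.mem_span_singleton] at hr
    obtain ⟨c, hc⟩ := hr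
    have hc' : c * gW = r * gy := congrArg Subtype.val hc
    set ε := epsHom (LaurentPolynomial ℤ) with hε
    have hεgy : ε gy = 0 := by
      rw [hy, ht₂, map_sub, map_one, epsHom_T, sub_self]
    have hεgW : ε gW = 1 - T 1 := by
      rw [hW, ht₁, ht₂, map_sub, map_one, map_mul, epsHom_T, epsHom_C, mul_one]
    have hεc : ε c = 0 := by
      have := congrArg ε hc'
      rw [map_mul, map_mul, hεgy, hεgW, mul_zero] at this
      rcases mul_eq_zero.mp this with h | h
      · exact h
      · exact absurd h one_sub_T_ne_zero
    obtain ⟨d, hd⟩ := dvd_of_eps_eq_zero c hεc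
    rw [← ht₂, ← hy] at hd
    have : gy * (d * gW) = gy * r := by
      rw [← mul_assoc, ← hd, hc', mul_comm]
    have hrd : r = d * gW := (mul_left_cancel₀ hgy0 this).symm
    rw [hI, Ideal.mem_span_singleton, ← hW]
    exact ⟨d, by rw [hrd, mul_comm]⟩
  have hinj : Function.Injective ψq :=
    LinearMap.ker_eq_bot.mp (Submodule.ker_liftQ_eq_bot I ψ hIle hker)
  -- surjectivity
  have hrep : ∀ x ∈ Submodule.span (LaurentPolynomial (LaurentPolynomial ℤ)) ({gW, gx, gy} : Set (LaurentPolynomial (LaurentPolynomial ℤ))),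
      ∃ r c : LaurentPolynomial (LaurentPolynomial ℤ), x = r * gy + c * gW := by
    intro x hxm
    induction hxm using Submodule.span_induction with
    | mem z hz =>
      simp only [Set.mem_insert_iff, Set.mem_singleton_iff] at hz
      rcases hz with rfl | rfl | rfl
      · exact ⟨0, 1, by ring⟩
      · refine ⟨-(T (-1)), T (-1), ?_⟩
        rw [hx, hy, hW, ht₂]
        rw [ht₂] at ht2u
        linear_combination (t₁ - 1) * ht2u
      · exact ⟨1, 0, by ring⟩
    | zero => exact ⟨0, 0, by ring⟩
    | add a b _ _ iha ihb =>
      obtain ⟨r1, c1, h1⟩ := iha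
      obtain ⟨r2, c2, h2⟩ := ihb
      exact ⟨r1 + r2, c1 + c2, by rw [h1, h2]; ring⟩
    | smul a x _ ih =>
      obtain ⟨r1, c1, h1⟩ := ih
      exact ⟨a * r1, a * c1, by rw [smul_eq_mul, h1]; ring⟩
  have hsurj : Function.Surjective ψq := by
    intro q
    induction q using Submodule.Quotient.induction_on with
    | _ m =>
      obtain ⟨x, hxm⟩ := m
      have hxm' : x ∈ Submodule.span (LaurentPolynomial (LaurentPolynomial ℤ)) ({gW, gx, gy} : Set (LaurentPolynomial (LaurentPolynomial ℤ))) := hM ▸ hxm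
      obtain ⟨r, c, hrc⟩ := hrep x hxm'
      refine ⟨Submodule.Quotient.mk r, ?_⟩
      rw [Submodule.liftQ_apply, hψ]
      rw [Submodule.Quotient.eq]
      have hcW : r • (⟨gy, hgy⟩ : M) - (⟨x, hxm⟩ : M) = (-c) • (⟨gW, hgW⟩ : M) := by
        apply Subtype.ext
        show r • gy - x = (-c) • gW
        simp only [smul_eq_mul]
        rw [hrc]; ring
      rw [hcW, hP]
      exact Submodule.smul_mem _ _ (Submodule.mem_span_singleton_self _)
  let eq1 := LinearEquiv.ofBijective ψq ⟨hinj, hsurj⟩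
  refine ⟨eq1.symm, ?_⟩
  have h1 : eq1 (1 : LaurentPolynomial (LaurentPolynomial ℤ) ⧸ I) = Submodule.Quotient.mk (⟨gy, hgy⟩ : M) := by
    show ψq (Submodule.Quotient.mk (1 : LaurentPolynomial (LaurentPolynomial ℤ))) = _
    rw [Submodule.liftQ_apply, hψ, one_smul]
  rw [← h1, LinearEquiv.symm_apply_apply]
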